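/- Fix positive integers s, M, N with N ≥ 2s, a constant δ ∈ (0,1), a norm ‖·‖_* on ℝ^N, and constants C₁, C₂ > 0. Suppose that for every matrix A ∈ ℝ^{M×N} satisfying the RIP of order 2s with constant δ, every x, x̂ ∈ ℝ^N, and every ρ ≥ 0, the conditions ‖x̂‖₁ ≤ ‖x‖₁ and ‖Ax − Ax̂‖₂ ≤ 2ρ imply ‖x̂ − x‖_* ≤ C₁·ρ + C₂·σ_s(x). Then for every matrix Φ ∈ ℝ^{M×N} satisfying RIP-NSP of order 2s with constant δ, every x, x̂ ∈ ℝ^N, and every ε ≥ 0, the conditions ‖x̂‖₁ ≤ ‖x‖₁ and ‖Φx − Φx̂‖₂ ≤ 2ε imply ‖x̂ − x‖_* ≤ C₁·(√(1+δ)/λ(Φ))·√(N/s)·ε + C₂·σ_s(x). -/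

import Mathlib

open scoped BigOperators Matrix

/-- The Euclidean (ℓ²) norm of a real vector. -/
noncomputable def l2norm {ι : Type*} [Fintype ι] (v : ι → ℝ) : ℝ :=
  Real.sqrt (∑ i, (v i) ^ 2)

/-- The ℓ¹ norm of a real vector. -/
noncomputable def l1norm {ι : Type*} [Fintype ι] (v : ι → ℝ) : ℝ :=
  ∑ i, |v i|

/-- `v` has at most `k` nonzero entries. -/
def IsSparse {ι : Type*} {α : Type*} [Zero α] (k : ℕ) (v : ι → α) : Prop :=
  ∃ T : Finset ι, T.card ≤ k ∧ ∀ i ∉ T, v i = 0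

/-- The restricted isometry property of order `k` with constant `δ`. -/
def HasRIP {M N : ℕ} (Φ : Matrix (Fin M) (Fin N) ℝ) (k : ℕ) (δ : ℝ) : Prop :=
  ∀ v : Fin N → ℝ, IsSparse k v →
    (1 - δ) * l2norm v ^ 2 ≤ l2norm (Φ.mulVec v) ^ 2 ∧
      l2norm (Φ.mulVec v) ^ 2 ≤ (1 + δ) * l2norm v ^ 2

/-- `Φ` has the same null space as some matrix with RIP of order `k`, constant `δ`. -/
def HasRIPNSP {M N : ℕ} (Φ : Matrix (Fin M) (Fin N) ℝ) (k : ℕ) (δ : ℝ) : Prop :=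
  ∃ A : Matrix (Fin M) (Fin N) ℝ,
    {v : Fin N → ℝ | A.mulVec v = 0} = {v : Fin N → ℝ | Φ.mulVec v = 0} ∧ HasRIP A k δ

/-- The null space property of order `s` with constant `γ`. -/
def HasNSP {M N : ℕ} (Φ : Matrix (Fin M) (Fin N) ℝ) (s : ℕ) (γ : ℝ) : Prop :=
  ∀ v : Fin N → ℝ, Φ.mulVec v = 0 → ∀ T : Finset (Fin N), T.card ≤ s →
    ∑ i ∈ T, |v i| ≤ γ * ∑ i ∈ Tᶜ, |v i|

/-- `σ_s(x)`: the ℓ¹ distance from `x` to the set of `s`-sparse vectors. -/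
noncomputable def sigmaApprox {N : ℕ} (s : ℕ) (x : Fin N → ℝ) : ℝ :=
  sInf { t : ℝ | ∃ y : Fin N → ℝ, IsSparse s y ∧ t = l1norm (x - y) }

/-- The smallest positive singular value of `Φ`: the infimum of `‖Φx‖₂` over unit
vectors `x` orthogonal to the kernel of `Φ`. -/
noncomputable def smallestPosSV {M N : ℕ} (Φ : Matrix (Fin M) (Fin N) ℝ) : ℝ :=
  sInf { t : ℝ | ∃ x : Fin N → ℝ, l2norm x = 1 ∧
    (∀ y : Fin N → ℝ, Φ.mulVec y = 0 → x ⬝ᵥ y = 0) ∧ t = l2norm (Φ.mulVec x) }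

/-- The operator norm of `Φ` (sup of `‖Φx‖₂` over unit vectors). -/
noncomputable def opNorm {M N : ℕ} (Φ : Matrix (Fin M) (Fin N) ℝ) : ℝ :=
  sSup { t : ℝ | ∃ x : Fin N → ℝ, l2norm x = 1 ∧ t = l2norm (Φ.mulVec x) }


section Helpers
open scoped Matrix

lemma l2norm_nonneg' {ι : Type*} [Fintype ι] (v : ι → ℝ) : 0 ≤ l2norm v := Real.sqrt_nonneg _

lemma l2norm_eq_norm {K : ℕ} (v : Fin K → ℝ) :
    l2norm v = ‖(WithLp.equiv 2 (Fin K → ℝ)).symm v‖ := by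
  rw [EuclideanSpace.norm_eq]
  simp [l2norm, sq_abs]

lemma l2norm_smul {K : ℕ} (a : ℝ) (v : Fin K → ℝ) : l2norm (a • v) = |a| * l2norm v := by
  rw [l2norm_eq_norm, l2norm_eq_norm v]
  have h : (WithLp.equiv 2 (Fin K → ℝ)).symm (a • v)
      = a • (WithLp.equiv 2 (Fin K → ℝ)).symm v := rfl
  rw [h, norm_smul, Real.norm_eq_abs]

lemma l2norm_eq_zero {K : ℕ} {v : Fin K → ℝ} : l2norm v = 0 ↔ v = 0 := by
  rw [l2norm_eq_norm, norm_eq_zero]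
  simp

lemma inner_eq_dot {K : ℕ} (x y : Fin K → ℝ) :
    (inner ℝ ((WithLp.equiv 2 (Fin K → ℝ)).symm x) ((WithLp.equiv 2 (Fin K → ℝ)).symm y) : ℝ)
      = x ⬝ᵥ y := by
  simp [PiLp.inner_apply, RCLike.inner_apply, dotProduct,
    mul_comm]

lemma rip_sparse_le {M N k : ℕ} {δ : ℝ} (hδ : 0 ≤ δ) {A : Matrix (Fin M) (Fin N) ℝ}
    (hA : HasRIP A k δ) {v : Fin N → ℝ} (hv : IsSparse k v) :
    l2norm (A.mulVec v) ≤ Real.sqrt (1 + δ) * l2norm v := by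
  have h := (hA v hv).2
  have h2 := Real.sqrt_le_sqrt h
  rwa [Real.sqrt_sq (l2norm_nonneg' _), Real.sqrt_mul (by linarith),
    Real.sqrt_sq (l2norm_nonneg' _)] at h2

/-- block decomposition -/
def blk {N : ℕ} (b j : ℕ) (u : Fin N → ℝ) : Fin N → ℝ :=
  fun i => if (i : ℕ) / b = j then u i else 0

lemma blk_sparse {N b j : ℕ} (hb : 0 < b) (u : Fin N → ℝ) : IsSparse b (blk b j u) := by
  refine ⟨Finset.univ.filter (fun i => (i : ℕ) / b = j), ?_, ?_⟩
  · have h : (Finset.univ.filter (fun i : Fin N => (i : ℕ) / b = j)).card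
        ≤ (Finset.range b).card := by
      refine Finset.card_le_card_of_injOn (fun i => (i : ℕ) % b) ?_ ?_
      · intro i hi
        exact Finset.mem_range.2 (Nat.mod_lt _ hb)
      · intro i hi i' hi' hmod
        simp only [Finset.mem_coe, Finset.mem_filter] at hi hi'
        refine Fin.ext ?_
        have e1 := Nat.div_add_mod (i : ℕ) b
        have e2 := Nat.div_add_mod (i' : ℕ) b
        have hmod' : (i : ℕ) % b = (i' : ℕ) % b := by simpa using hmod
        have h3 : (i : ℕ) / b = (i' : ℕ) / b := hi.2.trans hi'.2.symm
        rw [← e1, ← e2, h3, hmod']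
    simpa using h
  · intro i hi
    simp only [Finset.mem_filter, Finset.mem_univ, true_and] at hi
    simp [blk, hi]

lemma blk_sum {N b : ℕ} (hb : 0 < b) (hN : 0 < N) (u : Fin N → ℝ) :
    ∑ j ∈ Finset.range ((N - 1) / b + 1), blk b j u = u := by
  funext i
  have hlt : (i : ℕ) / b < (N - 1) / b + 1 := by
    have : (i : ℕ) ≤ N - 1 := by omega
    exact Nat.lt_succ_of_le (Nat.div_le_div_right this)
  rw [Finset.sum_apply]
  simp only [blk]
  rw [Finset.sum_eq_single ((i:ℕ)/b)]
  · simp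
  · intro j hj hne; simp [Ne.symm hne]
  · intro h; exact absurd (Finset.mem_range.2 hlt) h

lemma l2norm_sum_le {K : ℕ} (t : Finset ℕ) (f : ℕ → Fin K → ℝ) :
    l2norm (∑ j ∈ t, f j) ≤ ∑ j ∈ t, l2norm (f j) := by
  simp only [l2norm_eq_norm]
  have h : (WithLp.equiv 2 (Fin K → ℝ)).symm (∑ j ∈ t, f j)
      = ∑ j ∈ t, (WithLp.equiv 2 (Fin K → ℝ)).symm (f j) := by simp
  rw [h]
  exact norm_sum_le _ _

lemma sum_blk_l2 {N b : ℕ} (hb : 0 < b) (hN : 0 < N) (u : Fin N → ℝ) :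
    ∑ j ∈ Finset.range ((N - 1) / b + 1), l2norm (blk b j u)
      ≤ Real.sqrt ((N - 1) / b + 1 : ℕ) * l2norm u := by
  set m := (N - 1) / b + 1 with hm
  set S := ∑ j ∈ Finset.range m, l2norm (blk b j u) with hS
  have hS0 : 0 ≤ S := Finset.sum_nonneg fun j _ => l2norm_nonneg' _
  have hsq : S ^ 2 ≤ (m : ℝ) * ∑ i, (u i) ^ 2 := by
    have h1 : S ^ 2 ≤ (Finset.range m).card * ∑ j ∈ Finset.range m, l2norm (blk b j u) ^ 2 :=
      sq_sum_le_card_mul_sum_sq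
    have h2 : ∑ j ∈ Finset.range m, l2norm (blk b j u) ^ 2 = ∑ i, (u i) ^ 2 := by
      have h3 : ∀ j, l2norm (blk b j u) ^ 2 = ∑ i, (blk b j u i) ^ 2 := fun j =>
        Real.sq_sqrt (Finset.sum_nonneg fun i _ => sq_nonneg _)
      simp only [h3]
      rw [Finset.sum_comm]
      refine Finset.sum_congr rfl fun i _ => ?_
      have hlt : (i : ℕ) / b < m := by
        have : (i : ℕ) ≤ N - 1 := by omega
        exact Nat.lt_succ_of_le (Nat.div_le_div_right this)
      simp only [blk]
      rw [Finset.sum_eq_single ((i : ℕ) / b)]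
      · simp
      · intro j hj hne; simp [Ne.symm hne]
      · intro h; exact absurd (Finset.mem_range.2 hlt) h
    rwa [Finset.card_range, h2] at h1
  have hSsq : S = Real.sqrt (S ^ 2) := (Real.sqrt_sq hS0).symm
  rw [hSsq]
  calc Real.sqrt (S ^ 2) ≤ Real.sqrt ((m : ℝ) * ∑ i, (u i) ^ 2) := Real.sqrt_le_sqrt hsq
    _ = Real.sqrt m * l2norm u := by
        rw [Real.sqrt_mul (Nat.cast_nonneg _)]; rfl

lemma rip_opnorm {s M N : ℕ} (hs : 0 < s) (hN : 2 * s ≤ N) {δ : ℝ} (hδ : 0 ≤ δ)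
    {A : Matrix (Fin M) (Fin N) ℝ} (hA : HasRIP A (2 * s) δ) (u : Fin N → ℝ) :
    l2norm (A.mulVec u) ≤ Real.sqrt (1 + δ) * Real.sqrt ((N : ℝ) / (s : ℝ)) * l2norm u := by
  have hb0 : 0 < 2 * s := by omega
  have hN0 : 0 < N := by omega
  set b := 2 * s with hb
  set m := (N - 1) / b + 1 with hm
  have hu : A.mulVec u = ∑ j ∈ Finset.range m, A.mulVec (blk b j u) := by
    conv_lhs => rw [← blk_sum hb0 hN0 u]
    have h := map_sum A.mulVecLin (fun j => blk b j u) (Finset.range m)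
    simp only [Matrix.mulVecLin_apply] at h
    exact h
  have hmN : Real.sqrt m ≤ Real.sqrt ((N : ℝ) / (s : ℝ)) := by
    apply Real.sqrt_le_sqrt
    rw [le_div_iff₀ (by exact_mod_cast hs)]
    have h1 : (N - 1) / b * b ≤ N - 1 := Nat.div_mul_le_self _ _
    have h2 : m * b = (N - 1) / b * b + b := by rw [hm]; ring
    have h3 : 2 * (m * s) ≤ 2 * N := by
      have h : m * b = 2 * (m * s) := by rw [hb]; ring
      omega
    have h4 : m * s ≤ N := Nat.le_of_mul_le_mul_left h3 (by norm_num)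
    calc (m : ℝ) * s = ((m * s : ℕ) : ℝ) := by push_cast; ring
      _ ≤ N := by exact_mod_cast h4
  calc l2norm (A.mulVec u) = l2norm (∑ j ∈ Finset.range m, A.mulVec (blk b j u)) := by rw [← hu]
    _ ≤ ∑ j ∈ Finset.range m, l2norm (A.mulVec (blk b j u)) := l2norm_sum_le _ _
    _ ≤ ∑ j ∈ Finset.range m, Real.sqrt (1 + δ) * l2norm (blk b j u) :=
        Finset.sum_le_sum fun j _ => rip_sparse_le hδ hA (blk_sparse hb0 u)
    _ = Real.sqrt (1 + δ) * ∑ j ∈ Finset.range m, l2norm (blk b j u) := by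
        rw [Finset.mul_sum]
    _ ≤ Real.sqrt (1 + δ) * (Real.sqrt m * l2norm u) := by
        have h := sum_blk_l2 hb0 hN0 u
        exact mul_le_mul_of_nonneg_left (by rw [hm]; exact_mod_cast h) (Real.sqrt_nonneg _)
    _ ≤ Real.sqrt (1 + δ) * Real.sqrt ((N : ℝ) / (s : ℝ)) * l2norm u := by
        rw [mul_assoc]
        exact mul_le_mul_of_nonneg_left
          (mul_le_mul_of_nonneg_right hmN (l2norm_nonneg' _)) (Real.sqrt_nonneg _)

lemma sPSV_bddBelow {M N : ℕ} (Φ : Matrix (Fin M) (Fin N) ℝ) :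
    BddBelow { t : ℝ | ∃ x : Fin N → ℝ, l2norm x = 1 ∧
      (∀ y : Fin N → ℝ, Φ.mulVec y = 0 → x ⬝ᵥ y = 0) ∧ t = l2norm (Φ.mulVec x) } := by
  refine ⟨0, ?_⟩
  rintro t ⟨x, -, -, rfl⟩
  exact l2norm_nonneg' _

lemma sPSV_mul_le {M N : ℕ} (Φ : Matrix (Fin M) (Fin N) ℝ) (u : Fin N → ℝ)
    (hu : ∀ y : Fin N → ℝ, Φ.mulVec y = 0 → u ⬝ᵥ y = 0) :
    smallestPosSV Φ * l2norm u ≤ l2norm (Φ.mulVec u) := by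
  rcases eq_or_ne u 0 with rfl | hu0
  · simp [l2norm_eq_zero.2 rfl, l2norm]
  · set c := l2norm u with hc
    have hc0 : 0 < c := by
      rcases lt_or_eq_of_le (l2norm_nonneg' u) with h | h
      · exact h
      · exact absurd (l2norm_eq_zero.1 h.symm) hu0
    have hmem : c⁻¹ * l2norm (Φ.mulVec u) ∈ { t : ℝ | ∃ x : Fin N → ℝ, l2norm x = 1 ∧
        (∀ y : Fin N → ℝ, Φ.mulVec y = 0 → x ⬝ᵥ y = 0) ∧ t = l2norm (Φ.mulVec x) } := by
      refine ⟨c⁻¹ • u, ?_, ?_, ?_⟩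
      · rw [l2norm_smul, abs_of_pos (inv_pos.2 hc0), ← hc, inv_mul_cancel₀ (ne_of_gt hc0)]
      · intro y hy
        rw [smul_dotProduct, hu y hy, smul_zero]
      · rw [Matrix.mulVec_smul, l2norm_smul, abs_of_pos (inv_pos.2 hc0)]
    have h := csInf_le (sPSV_bddBelow Φ) hmem
    have h2 := mul_le_mul_of_nonneg_right h (le_of_lt hc0)
    calc smallestPosSV Φ * c ≤ c⁻¹ * l2norm (Φ.mulVec u) * c := h2
      _ = l2norm (Φ.mulVec u) := by field_simp

lemma sPSV_pos {M N : ℕ} (Φ : Matrix (Fin M) (Fin N) ℝ)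
    (hz : ∃ z : Fin N → ℝ, Φ.mulVec z ≠ 0) : 0 < smallestPosSV Φ := by
  classical
  let e := WithLp.equiv 2 (Fin N → ℝ)
  let f : EuclideanSpace ℝ (Fin N) →ₗ[ℝ] (Fin M → ℝ) :=
    Φ.mulVecLin ∘ₗ (WithLp.linearEquiv 2 ℝ (Fin N → ℝ)).toLinearMap
  set K : Submodule ℝ (EuclideanSpace ℝ (Fin N)) := LinearMap.ker f with hK
  have hf : ∀ x : EuclideanSpace ℝ (Fin N), f x = Φ.mulVec (e x) := fun x => rfl
  have hKtop : K ≠ ⊤ := by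
    obtain ⟨z, hz⟩ := hz
    intro hT
    have hm : e.symm z ∈ K := hT ▸ Submodule.mem_top
    have : Φ.mulVec z = 0 := by
      have := (LinearMap.mem_ker.1 hm)
      rwa [hf] at this
    exact hz this
  haveI : CompleteSpace K := FiniteDimensional.complete ℝ K
  have hbot : Kᗮ ≠ ⊥ := fun h => hKtop (Submodule.orthogonal_eq_bot_iff.1 h)
  obtain ⟨x₀, hx₀K, hx₀ne⟩ := Submodule.ne_bot_iff _ |>.1 hbot
  set x₁ : EuclideanSpace ℝ (Fin N) := ‖x₀‖⁻¹ • x₀ with hx₁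
  have hx₁n : ‖x₁‖ = 1 := norm_smul_inv_norm hx₀ne
  have hx₁K : x₁ ∈ Kᗮ := Kᗮ.smul_mem _ hx₀K
  set S : Set (EuclideanSpace ℝ (Fin N)) := Metric.sphere 0 1 ∩ (Kᗮ : Set _) with hSdef
  have hx₁S : x₁ ∈ S := ⟨mem_sphere_zero_iff_norm.2 hx₁n, hx₁K⟩
  have hScpt : IsCompact S :=
    (isCompact_sphere (0 : EuclideanSpace ℝ (Fin N)) 1).inter_right
      (Submodule.closed_of_finiteDimensional Kᗮ)
  let F : EuclideanSpace ℝ (Fin N) →ₗ[ℝ] EuclideanSpace ℝ (Fin M) :=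
    ((WithLp.linearEquiv 2 ℝ (Fin M → ℝ)).symm.toLinearMap) ∘ₗ f
  have hg : ∀ x : EuclideanSpace ℝ (Fin N), ‖F x‖ = l2norm (Φ.mulVec (e x)) := by
    intro x
    rw [l2norm_eq_norm]
    rfl
  have hgcont : Continuous fun x : EuclideanSpace ℝ (Fin N) => ‖F x‖ :=
    F.continuous_of_finiteDimensional.norm
  obtain ⟨a, haS, hmin⟩ := hScpt.exists_isMinOn ⟨x₁, hx₁S⟩ hgcont.continuousOn
  have haorth : a ∈ Kᗮ := haS.2
  have han : ‖a‖ = 1 := mem_sphere_zero_iff_norm.1 haS.1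
  have hga : 0 < ‖F a‖ := by
    rcases (norm_nonneg (F a)).lt_or_eq with h | h
    · exact h
    · exfalso
      have hFa : F a = 0 := norm_eq_zero.1 h.symm
      have hfa : f a = 0 := by
        have := congrArg (WithLp.linearEquiv 2 ℝ (Fin M → ℝ)) hFa
        simpa [F] using this
      have haK : a ∈ K := LinearMap.mem_ker.2 hfa
      have : (inner ℝ a a : ℝ) = 0 := (Submodule.mem_orthogonal _ _).1 haorth a haK
      have ha0 : a = 0 := inner_self_eq_zero.1 this
      rw [ha0, norm_zero] at han
      norm_num at han
  refine lt_of_lt_of_le hga (le_csInf ?_ ?_)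
  · refine ⟨l2norm (Φ.mulVec (e x₁)), e x₁, by rw [l2norm_eq_norm]; exact hx₁n, ?_, rfl⟩
    intro y hy
    have hyK : e.symm y ∈ K := LinearMap.mem_ker.2 (by rw [hf]; simpa using hy)
    have h0 := (Submodule.mem_orthogonal _ _).1 hx₁K _ hyK
    have hd : y ⬝ᵥ (e x₁) = 0 := by
      rw [← inner_eq_dot]
      simpa [e] using h0
    rw [dotProduct_comm] at hd
    exact hd
  · rintro t ⟨x, hx1, hxorth, rfl⟩
    have hx'K : e.symm x ∈ Kᗮ := by
      rw [Submodule.mem_orthogonal]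
      intro u huK
      have hΦu : Φ.mulVec (e u) = 0 := by rw [← hf]; exact LinearMap.mem_ker.1 huK
      have h1 := hxorth (e u) hΦu
      have hd : (e u) ⬝ᵥ x = 0 := by rw [dotProduct_comm]; exact h1
      have h2 : (inner ℝ (e.symm (e u)) (e.symm x) : ℝ) = 0 := by rw [inner_eq_dot]; exact hd
      simpa using h2
    have hx'S : e.symm x ∈ S :=
      ⟨mem_sphere_zero_iff_norm.2 (by rw [← l2norm_eq_norm]; exact hx1), hx'K⟩
    have h3 := isMinOn_iff.1 hmin _ hx'S
    calc ‖F a‖ ≤ ‖F (e.symm x)‖ := h3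
      _ = l2norm (Φ.mulVec x) := by rw [hg]; rfl

end Helpers

/-- **Proposition 3.2.**
If every RIP matrix `A` (order `2s`, constant `δ`) satisfies
`‖x̂‖₁ ≤ ‖x‖₁ ∧ ‖Ax - Ax̂‖₂ ≤ 2ρ → ‖x̂ - x‖_* ≤ C₁ ρ + C₂ σ_s(x)`,
then every RIP-NSP matrix `Φ` (order `2s`, constant `δ`) satisfies
`‖x̂‖₁ ≤ ‖x‖₁ ∧ ‖Φx - Φx̂‖₂ ≤ 2ε → ‖x̂ - x‖_* ≤ C₁ (√(1+δ)/λ(Φ)) √(N/s) ε + C₂ σ_s(x)`. -/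
theorem stmt6 {s M N : ℕ} (hs : 0 < s) (hM : 0 < M) (hN : 2 * s ≤ N)
    {δ : ℝ} (hδ0 : 0 < δ) (hδ1 : δ < 1)
    (nstar : (Fin N → ℝ) → ℝ)
    (h_smul : ∀ (a : ℝ) (v : Fin N → ℝ), nstar (a • v) = |a| * nstar v)
    (h_add : ∀ u v : Fin N → ℝ, nstar (u + v) ≤ nstar u + nstar v)
    (h_eq_zero : ∀ v : Fin N → ℝ, nstar v = 0 ↔ v = 0)
    {C₁ C₂ : ℝ} (hC₁ : 0 < C₁) (hC₂ : 0 < C₂)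
    (H : ∀ A : Matrix (Fin M) (Fin N) ℝ, HasRIP A (2 * s) δ →
      ∀ x xhat : Fin N → ℝ, ∀ ρ : ℝ, 0 ≤ ρ →
        l1norm xhat ≤ l1norm x →
        l2norm (A.mulVec x - A.mulVec xhat) ≤ 2 * ρ →
        nstar (xhat - x) ≤ C₁ * ρ + C₂ * sigmaApprox s x) :
    ∀ Φ : Matrix (Fin M) (Fin N) ℝ, HasRIPNSP Φ (2 * s) δ →
      ∀ x xhat : Fin N → ℝ, ∀ ε : ℝ, 0 ≤ ε →
        l1norm xhat ≤ l1norm x →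
        l2norm (Φ.mulVec x - Φ.mulVec xhat) ≤ 2 * ε →
        nstar (xhat - x) ≤
          C₁ * (Real.sqrt (1 + δ) / smallestPosSV Φ) * Real.sqrt ((N : ℝ) / (s : ℝ)) * ε +
            C₂ * sigmaApprox s x := by
  intro Φ hΦ x xhat ε hε h1 h2
  obtain ⟨A, hkerEq, hARIP⟩ := hΦ
  have hδnn : (0:ℝ) ≤ δ := le_of_lt hδ0
  have hN0 : 0 < N := by omega
  have hzex : ∃ z : Fin N → ℝ, Φ.mulVec z ≠ 0 := by
    set z : Fin N → ℝ := fun i => if i = ⟨0, hN0⟩ then 1 else 0 with hzdef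
    have hsp : IsSparse (2 * s) z := by
      refine ⟨{⟨0, hN0⟩}, ?_, ?_⟩
      · rw [Finset.card_singleton]; omega
      · intro i hi
        simp only [Finset.mem_singleton] at hi
        simp [hzdef, hi]
    have hz2 : (∑ i, (z i) ^ 2) = 1 := by
      have hpt : ∀ i : Fin N, (z i) ^ 2 = if i = ⟨0, hN0⟩ then 1 else 0 := by
        intro i; by_cases h : i = ⟨0, hN0⟩ <;> simp [hzdef, h]
      simp only [hpt]
      simp
    have hzl2 : l2norm z = 1 := by rw [l2norm, hz2, Real.sqrt_one]
    have hA := (hARIP z hsp).1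
    rw [hzl2] at hA
    have hAz : A.mulVec z ≠ 0 := by
      intro h0
      rw [h0] at hA
      have : l2norm (0 : Fin M → ℝ) = 0 := l2norm_eq_zero.2 rfl
      rw [this] at hA
      nlinarith
    refine ⟨z, fun hΦz => hAz ?_⟩
    have hmem : z ∈ {v : Fin N → ℝ | Φ.mulVec v = 0} := hΦz
    rw [← hkerEq] at hmem
    exact hmem
  have hlam0 : 0 < smallestPosSV Φ := sPSV_pos Φ hzex
  set lam := smallestPosSV Φ with hlam
  set v : Fin N → ℝ := x - xhat with hv
  have hΦv : l2norm (Φ.mulVec v) ≤ 2 * ε := by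
    have hsub : Φ.mulVec v = Φ.mulVec x - Φ.mulVec xhat := by
      rw [hv, Matrix.mulVec_sub]
    rwa [hsub]
  let e := WithLp.equiv 2 (Fin N → ℝ)
  let f : EuclideanSpace ℝ (Fin N) →ₗ[ℝ] (Fin M → ℝ) :=
    Φ.mulVecLin ∘ₗ (WithLp.linearEquiv 2 ℝ (Fin N → ℝ)).toLinearMap
  set K : Submodule ℝ (EuclideanSpace ℝ (Fin N)) := LinearMap.ker f with hK
  have hf : ∀ y : EuclideanSpace ℝ (Fin N), f y = Φ.mulVec (e y) := fun y => rfl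
  haveI : CompleteSpace K := FiniteDimensional.complete ℝ K
  obtain ⟨w, hwK, u, huK, hdecomp⟩ := K.exists_add_mem_mem_orthogonal (e.symm v)
  have hΦw : Φ.mulVec (e w) = 0 := by rw [← hf]; exact LinearMap.mem_ker.1 hwK
  have hAw : A.mulVec (e w) = 0 := by
    have hmem : e w ∈ {v : Fin N → ℝ | Φ.mulVec v = 0} := hΦw
    rw [← hkerEq] at hmem
    exact hmem
  have hvsum : v = e w + e u := by
    have h := congrArg e hdecomp
    rw [Equiv.apply_symm_apply] at h
    exact h
  have hΦu : Φ.mulVec (e u) = Φ.mulVec v := by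
    rw [hvsum, Matrix.mulVec_add, hΦw, zero_add]
  have hAu : A.mulVec (e u) = A.mulVec v := by
    rw [hvsum, Matrix.mulVec_add, hAw, zero_add]
  have hu₀orth : ∀ y : Fin N → ℝ, Φ.mulVec y = 0 → (e u) ⬝ᵥ y = 0 := by
    intro y hy
    have hyK : e.symm y ∈ K := LinearMap.mem_ker.2 (by rw [hf]; simpa using hy)
    have h0 := (Submodule.mem_orthogonal _ _).1 huK _ hyK
    have hd : y ⬝ᵥ (e u) = 0 := by
      rw [← inner_eq_dot]
      simpa [e] using h0
    rw [dotProduct_comm] at hd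
    exact hd
  set ρ : ℝ := Real.sqrt (1 + δ) / lam * Real.sqrt ((N : ℝ) / (s : ℝ)) * ε with hρ
  have hρ0 : 0 ≤ ρ := by
    apply mul_nonneg (mul_nonneg (div_nonneg (Real.sqrt_nonneg _) hlam0.le) (Real.sqrt_nonneg _)) hε
  have hbound : l2norm (A.mulVec x - A.mulVec xhat) ≤ 2 * ρ := by
    have e1 : A.mulVec x - A.mulVec xhat = A.mulVec v := by rw [hv, Matrix.mulVec_sub]
    rw [e1, ← hAu]
    have h3 : l2norm (A.mulVec (e u)) ≤
        Real.sqrt (1 + δ) * Real.sqrt ((N : ℝ) / (s : ℝ)) * l2norm (e u) :=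
      rip_opnorm hs hN hδnn hARIP (e u)
    have h4 : lam * l2norm (e u) ≤ l2norm (Φ.mulVec (e u)) := sPSV_mul_le Φ (e u) hu₀orth
    have h5 : l2norm (Φ.mulVec (e u)) ≤ 2 * ε := by rw [hΦu]; exact hΦv
    have hu0nn := l2norm_nonneg' (e u)
    have h6 : l2norm (e u) ≤ 2 * ε / lam := by
      rw [le_div_iff₀ hlam0]
      calc l2norm (e u) * lam = lam * l2norm (e u) := by ring
        _ ≤ l2norm (Φ.mulVec (e u)) := h4
        _ ≤ 2 * ε := h5
    calc l2norm (A.mulVec (e u))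
        ≤ Real.sqrt (1 + δ) * Real.sqrt ((N : ℝ) / (s : ℝ)) * l2norm (e u) := h3
      _ ≤ Real.sqrt (1 + δ) * Real.sqrt ((N : ℝ) / (s : ℝ)) * (2 * ε / lam) := by
          refine mul_le_mul_of_nonneg_left h6 ?_
          exact mul_nonneg (Real.sqrt_nonneg _) (Real.sqrt_nonneg _)
      _ = 2 * ρ := by
          rw [hρ]
          field_simp
  have hfinal := H A hARIP x xhat ρ hρ0 h1 hbound
  calc nstar (xhat - x) ≤ C₁ * ρ + C₂ * sigmaApprox s x := hfinal
    _ = C₁ * (Real.sqrt (1 + δ) / lam) * Real.sqrt ((N : ℝ) / (s : ℝ)) * ε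
          + C₂ * sigmaApprox s x := by rw [hρ]; ring
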